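/- For every ε > 0 and every integer n ≥ 1, one has Σ_{k=1}^{n} P( |S_k| < ε ) · P( τ_{2ε} > n − k ) ≤ 1, with the convention P(τ_{2ε} > 0) = 1. (Indeed, the events A_k = { |S_k| < ε and |S_p − S_k| > 2ε for all p = k+1,…,n } are pairwise disjoint, and P(A_k) ≥ P(|S_k| < ε) P(τ_{2ε} > n−k) by independence and stationarity of the increments.) -/

import Mathlib

open MeasureTheory ProbabilityTheory Filter Real
open scoped ENNReal NNReal

lemma sum_filter_fin_lt {M : Type*} [AddCommMonoid M] (j m : ℕ) (hm : m ≤ j) (f : ℕ → M) :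
    ∑ i ∈ Finset.univ.filter (fun i : Fin j => (i : ℕ) < m), f i = ∑ i ∈ Finset.range m, f i := by
  rw [Finset.sum_filter, Fin.sum_univ_eq_sum_range (fun i => if i < m then f i else 0),
    ← Finset.sum_filter]
  congr 1
  ext i
  simp only [Finset.mem_filter, Finset.mem_range]
  omega

lemma tuple_law {Ω : Type*} [MeasurableSpace Ω] (P : Measure Ω) [IsProbabilityMeasure P]
    (X : ℕ → Ω → EuclideanSpace ℝ (Fin 2))
    (hXmeas : ∀ n, Measurable (X n))
    (hindep : iIndepFun X P)
    (hident : ∀ n, P.map (X n) = P.map (X 0)) (k j : ℕ) :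
    P.map (fun ω (i : Fin j) => X (k + i) ω)
      = Measure.pi (fun _ : Fin j => P.map (X 0)) := by
  classical
  haveI hμ : IsProbabilityMeasure (P.map (X 0)) :=
    Measure.isProbabilityMeasure_map (hXmeas 0).aemeasurable
  have hmeas : Measurable (fun ω (i : Fin j) => X (k + i) ω) :=
    measurable_pi_lambda _ (fun i => hXmeas _)
  refine (Measure.pi_eq (μ := fun _ : Fin j => P.map (X 0)) fun s hs => ?_).symm
  rw [Measure.map_apply hmeas (MeasurableSet.univ_pi hs)]
  set sets : ℕ → Set (EuclideanSpace ℝ (Fin 2)) :=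
    fun m => if h : k ≤ m ∧ m < k + j then s ⟨m - k, by omega⟩ else Set.univ with hsets
  have hpre : (fun ω (i : Fin j) => X (k + i) ω) ⁻¹' (Set.pi Set.univ s)
      = ⋂ m ∈ Finset.Ico k (k + j), X m ⁻¹' (sets m) := by
    ext ω
    simp only [Set.mem_preimage, Set.mem_pi, Set.mem_univ, forall_true_left, Set.mem_iInter,
      Finset.mem_Ico, hsets]
    constructor
    · intro h m hm
      rw [dif_pos hm]
      have hmk : k + (m - k) = m := by omega
      have := h ⟨m - k, by omega⟩
      simpa [hmk] using this
    · intro h i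
      have := h (k + i) ⟨by omega, by omega⟩
      rw [dif_pos ⟨by omega, by omega⟩] at this
      have : X (k + i) ω ∈ s ⟨k + (i : ℕ) - k, by omega⟩ := this
      simpa [Nat.add_sub_cancel_left] using this
  rw [hpre, hindep.measure_inter_preimage_eq_mul (Finset.Ico k (k + j))
    (fun m hm => by
      simp only [Finset.mem_Ico] at hm
      show MeasurableSet (if h : k ≤ m ∧ m < k + j then s ⟨m - k, by omega⟩ else Set.univ)
      rw [dif_pos hm]
      exact hs _)]
  refine Finset.prod_bij (fun (m : ℕ) (hm : m ∈ Finset.Ico k (k + j)) =>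
      (⟨m - k, by simp only [Finset.mem_Ico] at hm; omega⟩ : Fin j)) ?_ ?_ ?_ ?_
  · intro a ha; exact Finset.mem_univ _
  · intro a ha b hb hab
    simp only [Finset.mem_Ico] at ha hb
    simp only [Fin.mk.injEq] at hab
    omega
  · intro b _
    refine ⟨k + b, by simp only [Finset.mem_Ico]; omega, ?_⟩
    ext
    simp
  · intro m hm
    simp only [Finset.mem_Ico] at hm
    rw [hsets]
    simp only [dif_pos hm]
    rw [← Measure.map_apply (hXmeas m) (hs _), hident m]

/-- Let `S n = X 1 + ⋯ + X n` be a planar random walk with i.i.d. steps and let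
`τ_{2ε} = min {m ≥ 1 : |S m| < 2ε}`.  For every `ε > 0` and `n ≥ 1`,
`Σ_{k=1}^n P(|S k| < ε) · P(τ_{2ε} > n − k) ≤ 1`, where the event `{τ_{2ε} > j}` is written
as "no return `m ∈ [1, j]` with `|S m| < 2ε`", which for `j = 0` is the sure event (the
convention `P(τ_{2ε} > 0) = 1`). -/
theorem random_walk_last_visit_decomposition
    {Ω : Type*} [MeasurableSpace Ω] (P : Measure Ω) [IsProbabilityMeasure P]
    (X : ℕ → Ω → EuclideanSpace ℝ (Fin 2))
    (hXmeas : ∀ n, Measurable (X n))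
    (hindep : iIndepFun X P)
    (hident : ∀ n, P.map (X n) = P.map (X 0))
    (S : ℕ → Ω → EuclideanSpace ℝ (Fin 2))
    (hS : ∀ n ω, S n ω = ∑ k ∈ Finset.range n, X k ω)
    (ε : ℝ) (hε : 0 < ε) (n : ℕ) (hn : 1 ≤ n) :
    ∑ k ∈ Finset.Icc 1 n,
        (P {ω | ‖S k ω‖ < ε}).toReal *
          (P {ω | ∀ m : ℕ, 1 ≤ m → m ≤ n - k → 2 * ε ≤ ‖S m ω‖}).toReal ≤ 1 := by
  classical
  have hSmeas : ∀ m, Measurable (S m) := by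
    intro m
    have : S m = fun ω => ∑ i ∈ Finset.range m, X i ω := funext (hS m)
    rw [this]
    exact Finset.measurable_sum _ (fun i _ => hXmeas i)
  set A : ℕ → Set Ω := fun k =>
    {ω | ‖S k ω‖ < ε} ∩ {ω | ∀ m : ℕ, 1 ≤ m → m ≤ n - k → 2 * ε ≤ ‖S (k + m) ω - S k ω‖}
    with hA
  have hBmeas : ∀ k : ℕ, MeasurableSet {ω | ‖S k ω‖ < ε} :=
    fun k => measurableSet_lt (hSmeas k).norm measurable_const
  have hCmeas : ∀ k j : ℕ,
      MeasurableSet {ω | ∀ m : ℕ, 1 ≤ m → m ≤ j → 2 * ε ≤ ‖S (k + m) ω - S k ω‖} := by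
    intro k j
    have : {ω | ∀ m : ℕ, 1 ≤ m → m ≤ j → 2 * ε ≤ ‖S (k + m) ω - S k ω‖}
        = ⋂ (m : ℕ) (_ : 1 ≤ m) (_ : m ≤ j), {ω | 2 * ε ≤ ‖S (k + m) ω - S k ω‖} := by
      ext ω; simp [Set.mem_iInter]
    rw [this]
    exact MeasurableSet.iInter fun m => MeasurableSet.iInter fun _ =>
      MeasurableSet.iInter fun _ =>
        measurableSet_le measurable_const ((hSmeas _).sub (hSmeas k)).norm
  have hAmeas : ∀ k, MeasurableSet (A k) := fun k => (hBmeas k).inter (hCmeas k (n - k))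
  have hdisj : (↑(Finset.Icc 1 n) : Set ℕ).PairwiseDisjoint A := by
    have key : ∀ k l : ℕ, k ∈ (↑(Finset.Icc 1 n) : Set ℕ) → l ∈ (↑(Finset.Icc 1 n) : Set ℕ) →
        k < l → Disjoint (A k) (A l) := by
      intro k l hk hl h
      simp only [Finset.coe_Icc, Set.mem_Icc] at hk hl
      refine Set.disjoint_left.2 fun ω hωk hωl => ?_
      obtain ⟨hk1, hkC⟩ := hωk
      obtain ⟨hl1, -⟩ := hωl
      have hm := hkC (l - k) (by omega) (by omega)
      rw [show k + (l - k) = l by omega] at hm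
      have htri := norm_sub_le (S l ω) (S k ω)
      simp only [Set.mem_setOf_eq] at hk1 hl1
      linarith
    intro k hk l hl hkl
    rcases lt_or_gt_of_ne hkl with h | h
    · exact key k l hk hl h
    · exact (key l k hl hk h).symm
  have hsum : ∑ k ∈ Finset.Icc 1 n, P (A k) ≤ 1 := by
    rw [← measure_biUnion_finset hdisj fun k _ => hAmeas k]
    exact prob_le_one
  have hkey : ∀ k ∈ Finset.Icc 1 n,
      P {ω | ‖S k ω‖ < ε} * P {ω | ∀ m : ℕ, 1 ≤ m → m ≤ n - k → 2 * ε ≤ ‖S m ω‖}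
        = P (A k) := by
    intro k hk
    set j := n - k with hj
    set F : Set (Fin k → EuclideanSpace ℝ (Fin 2)) := {v | ‖∑ i, v i‖ < ε} with hF
    set G : Set (Fin j → EuclideanSpace ℝ (Fin 2)) :=
      {v | ∀ m : ℕ, 1 ≤ m → m ≤ j →
        2 * ε ≤ ‖∑ i ∈ Finset.univ.filter (fun i : Fin j => (i : ℕ) < m), v i‖} with hG
    have hFmeas : MeasurableSet F := by
      have hm : Measurable fun v : Fin k → EuclideanSpace ℝ (Fin 2) => ‖∑ i, v i‖ :=
        (Finset.measurable_sum _ fun i _ => measurable_pi_apply i).norm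
      exact measurableSet_lt hm measurable_const
    have hGmeas : MeasurableSet G := by
      have hm : ∀ m : ℕ, Measurable fun v : Fin j → EuclideanSpace ℝ (Fin 2) =>
          ‖∑ i ∈ Finset.univ.filter (fun i : Fin j => (i : ℕ) < m), v i‖ :=
        fun m => (Finset.measurable_sum _ fun i _ => measurable_pi_apply i).norm
      have hGi : G = ⋂ (m : ℕ) (_ : 1 ≤ m) (_ : m ≤ j),
          {v | 2 * ε ≤ ‖∑ i ∈ Finset.univ.filter (fun i : Fin j => (i : ℕ) < m), v i‖} := by
        ext v; simp [hG, Set.mem_iInter]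
      rw [hGi]
      exact MeasurableSet.iInter fun m => MeasurableSet.iInter fun _ =>
        MeasurableSet.iInter fun _ => measurableSet_le measurable_const (hm m)
    have hmeasT0k : Measurable (fun ω (i : Fin k) => X (0 + (i : ℕ)) ω) :=
      measurable_pi_lambda _ fun i => hXmeas _
    have hmeasTkj : Measurable (fun ω (i : Fin j) => X (k + (i : ℕ)) ω) :=
      measurable_pi_lambda _ fun i => hXmeas _
    have hmeasT0j : Measurable (fun ω (i : Fin j) => X (0 + (i : ℕ)) ω) :=
      measurable_pi_lambda _ fun i => hXmeas _
    -- preimage identities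
    have hBeq : {ω | ‖S k ω‖ < ε} = (fun ω (i : Fin k) => X (0 + (i : ℕ)) ω) ⁻¹' F := by
      ext ω
      simp only [Set.mem_setOf_eq, Set.mem_preimage, hF, zero_add]
      rw [hS k ω, ← Fin.sum_univ_eq_sum_range (fun i => X i ω) k]
    have hsum2 : ∀ ω, ∀ m ≤ j,
        (∑ i ∈ Finset.univ.filter (fun i : Fin j => (i : ℕ) < m), X (k + (i : ℕ)) ω)
          = S (k + m) ω - S k ω := by
      intro ω m hm
      rw [sum_filter_fin_lt j m hm (fun i => X (k + i) ω), hS (k + m) ω, hS k ω,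
        Finset.sum_range_add]
      abel
    have hCeq : {ω | ∀ m : ℕ, 1 ≤ m → m ≤ j → 2 * ε ≤ ‖S (k + m) ω - S k ω‖}
        = (fun ω (i : Fin j) => X (k + (i : ℕ)) ω) ⁻¹' G := by
      ext ω
      simp only [Set.mem_setOf_eq, Set.mem_preimage, hG]
      constructor
      · intro h m h1 h2; rw [hsum2 ω m h2]; exact h m h1 h2
      · intro h m h1 h2; rw [← hsum2 ω m h2]; exact h m h1 h2
    have hsum3 : ∀ ω, ∀ m ≤ j,
        (∑ i ∈ Finset.univ.filter (fun i : Fin j => (i : ℕ) < m), X (0 + (i : ℕ)) ω)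
          = S m ω := by
      intro ω m hm
      rw [sum_filter_fin_lt j m hm (fun i => X (0 + i) ω), hS m ω]
      simp [zero_add]
    have hC'eq : {ω | ∀ m : ℕ, 1 ≤ m → m ≤ j → 2 * ε ≤ ‖S m ω‖}
        = (fun ω (i : Fin j) => X (0 + (i : ℕ)) ω) ⁻¹' G := by
      ext ω
      simp only [Set.mem_setOf_eq, Set.mem_preimage, hG]
      constructor
      · intro h m h1 h2; rw [hsum3 ω m h2]; exact h m h1 h2
      · intro h m h1 h2; rw [← hsum3 ω m h2]; exact h m h1 h2
    -- independence
    have hind2 : IndepFun (fun ω (i : Fin k) => X (0 + (i : ℕ)) ω)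
        (fun ω (i : Fin j) => X (k + (i : ℕ)) ω) P := by
      have hdisjST : Disjoint (Finset.range k) (Finset.Ico k (k + j)) := by
        rw [Finset.disjoint_left]
        intro a ha hb
        simp only [Finset.mem_range] at ha
        simp only [Finset.mem_Ico] at hb
        omega
      have h := hindep.indepFun_finset (Finset.range k) (Finset.Ico k (k + j)) hdisjST hXmeas
      have hφ1 : Measurable fun (v : ↥(Finset.range k) → EuclideanSpace ℝ (Fin 2))
          (i : Fin k) => v ⟨(i : ℕ), Finset.mem_range.mpr i.isLt⟩ :=
        measurable_pi_lambda _ fun i => measurable_pi_apply _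
      have hφ2 : Measurable fun (v : ↥(Finset.Ico k (k + j)) → EuclideanSpace ℝ (Fin 2))
          (i : Fin j) => v ⟨k + (i : ℕ), by simp only [Finset.mem_Ico]; omega⟩ :=
        measurable_pi_lambda _ fun i => measurable_pi_apply _
      have h2 := h.comp hφ1 hφ2
      convert h2 using 1
      funext ω i; simp
      funext ω i; simp
    have hPC : P {ω | ∀ m : ℕ, 1 ≤ m → m ≤ j → 2 * ε ≤ ‖S m ω‖}
        = P {ω | ∀ m : ℕ, 1 ≤ m → m ≤ j → 2 * ε ≤ ‖S (k + m) ω - S k ω‖} := by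
      rw [hCeq, hC'eq, ← Measure.map_apply hmeasTkj hGmeas, ← Measure.map_apply hmeasT0j hGmeas,
        tuple_law P X hXmeas hindep hident k j, tuple_law P X hXmeas hindep hident 0 j]
    simp only [hA]
    rw [hPC, hBeq, hCeq]
    exact (hind2.measure_inter_preimage_eq_mul _ _ hFmeas hGmeas).symm
  calc ∑ k ∈ Finset.Icc 1 n,
        (P {ω | ‖S k ω‖ < ε}).toReal *
          (P {ω | ∀ m : ℕ, 1 ≤ m → m ≤ n - k → 2 * ε ≤ ‖S m ω‖}).toReal
      = (∑ k ∈ Finset.Icc 1 n, P (A k)).toReal := by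
        rw [ENNReal.toReal_sum (fun k _ => measure_ne_top P _)]
        refine Finset.sum_congr rfl fun k hk => ?_
        rw [← hkey k hk, ENNReal.toReal_mul]
    _ ≤ 1 := by
        rw [← ENNReal.toReal_one]
        exact ENNReal.toReal_mono ENNReal.one_ne_top hsum
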